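/- Let (m_n) be a sequence of positive integers and (μ_n) a sequence in (0,∞) such that m_n → ∞, μ_n → 0 and m_n^γ·μ_n → C as n → ∞ for some constant C ∈ (0, b/(1−γ)). Then the truncated partition function admits the first-order expansion z_{m_n}(e^{μ_n}) = z(1) + z'(1)·μ_n + o(μ_n), i.e. (z_{m_n}(e^{μ_n}) − z(1) − μ_n·Σ_{k=0}^∞ k·w(k))/μ_n → 0 as n → ∞. -/

import Mathlib

open Filter Topology

/-- Zero-range jump rates: `g 0 = 0`, `g n = 1 + b / n ^ γ` for `n ≥ 1`. -/
noncomputable def zrpG (b γ : ℝ) (n : ℕ) : ℝ := if n = 0 then 0 else 1 + b / (n : ℝ) ^ γ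

/-- Stationary weights: `w 0 = 1`, `w n = ∏_{k=1}^n 1 / g k`. -/
noncomputable def zrpW (b γ : ℝ) (n : ℕ) : ℝ := ∏ k ∈ Finset.Icc 1 n, (zrpG b γ k)⁻¹

/-- Single-site partition function `z φ = Σ_{k≥0} w k · φ^k`. -/
noncomputable def zrpZfun (b γ φ : ℝ) : ℝ := ∑' k : ℕ, zrpW b γ k * φ ^ k

/-- Critical density `ρ_c = (Σ k·w k) / z 1`. -/
noncomputable def zrpRhoC (b γ : ℝ) : ℝ :=
  (∑' k : ℕ, (k : ℝ) * zrpW b γ k) / (∑' k : ℕ, zrpW b γ k)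

/-- Critical variance `σ_c² = (Σ k²·w k) / z 1 − ρ_c²`. -/
noncomputable def zrpSigmaSq (b γ : ℝ) : ℝ :=
  (∑' k : ℕ, (k : ℝ) ^ 2 * zrpW b γ k) / (∑' k : ℕ, zrpW b γ k) - (zrpRhoC b γ) ^ 2

/-- Truncated partition function `z_m(φ) = Σ_{k=0}^m w k · φ^k`. -/
noncomputable def zrpZtrunc (b γ : ℝ) (m : ℕ) (φ : ℝ) : ℝ :=
  ∑ k ∈ Finset.range (m + 1), zrpW b γ k * φ ^ k

/-- Truncated density function `R_m(φ) = (Σ_{k=0}^m k·w k·φ^k) / z_m(φ)`. -/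
noncomputable def zrpRtrunc (b γ : ℝ) (m : ℕ) (φ : ℝ) : ℝ :=
  (∑ k ∈ Finset.range (m + 1), (k : ℝ) * zrpW b γ k * φ ^ k) / zrpZtrunc b γ m φ

/-- Canonical partition function `Z(L,N) = Σ_{η : Fin L → ℕ, Σ η = N} ∏ w (η x)`. -/
noncomputable def zrpZc (b γ : ℝ) (L N : ℕ) : ℝ :=
  ∑ η ∈ (Fintype.piFinset fun _ : Fin L => Finset.range (N + 1)).filter
      (fun η => ∑ x, η x = N),
    ∏ x, zrpW b γ (η x)

/-- Cut-off canonical partition function, restricting to `η x ≤ m` for all `x`. -/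
noncomputable def zrpQc (b γ : ℝ) (L N m : ℕ) : ℝ :=
  ∑ η ∈ (Fintype.piFinset fun _ : Fin L => Finset.range (N + 1)).filter
      (fun η => ∑ x, η x = N ∧ ∀ x, η x ≤ m),
    ∏ x, zrpW b γ (η x)

/-- Finite-size rate function `I_{L,N}(m)`. -/
noncomputable def zrpI (b γ : ℝ) (L N m : ℕ) : ℝ :=
  -(1 / (L : ℝ)) * Real.log ((zrpQc b γ L N m - zrpQc b γ L N (m - 1)) / zrpZc b γ L N)


/-- log(1+u) ≥ u - u² for u ≥ 0 -/
lemma log_ge_sub_sq {u : ℝ} (hu : 0 ≤ u) : u - u^2 ≤ Real.log (1 + u) := by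
  have h1 : (0:ℝ) < 1 + u := by linarith
  have h2 := Real.one_sub_inv_le_log_of_pos h1
  have h3 : u - u^2 ≤ 1 - (1+u)⁻¹ := by
    have h4 : (1+u)⁻¹ * (1+u) = 1 := inv_mul_cancel₀ h1.ne'
    nlinarith [sq_nonneg u, mul_pos (inv_pos.mpr h1) h1]
  linarith

/-- MVT consequences for x ↦ x^p, 0 < p < 1 -/
lemma rpow_step {p : ℝ} (hp0 : 0 < p) (hp1 : p < 1) {x : ℝ} (hx : 0 ≤ x) :
    ∃ ξ ∈ Set.Ioo x (x+1), (x+1) ^ p - x ^ p = p * ξ ^ (p - 1) := by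
  have hlt : x < x + 1 := by linarith
  have hcont : ContinuousOn (fun t : ℝ => t ^ p) (Set.Icc x (x+1)) := by
    intro y _
    exact (Real.continuousAt_rpow_const y p (Or.inr hp0.le)).continuousWithinAt
  have hderiv : ∀ y ∈ Set.Ioo x (x+1), HasDerivAt (fun t : ℝ => t ^ p) (p * y ^ (p-1)) y := by
    intro y hy
    have hy0 : y ≠ 0 := by have := hy.1; nlinarith [hx]
    exact Real.hasDerivAt_rpow_const (Or.inl hy0)
  obtain ⟨ξ, hξ, hval⟩ := exists_hasDerivAt_eq_slope (fun t : ℝ => t ^ p)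
    (fun y => p * y ^ (p-1)) hlt hcont hderiv
  refine ⟨ξ, hξ, ?_⟩
  rw [hval]
  simp

lemma rpow_succ_sub_le {p : ℝ} (hp0 : 0 < p) (hp1 : p < 1) {x : ℝ} (hx : 0 < x) :
    (x+1) ^ p - x ^ p ≤ p * x ^ (p - 1) := by
  obtain ⟨ξ, hξ, hval⟩ := rpow_step hp0 hp1 hx.le
  rw [hval]
  have : ξ ^ (p-1) ≤ x ^ (p-1) :=
    Real.rpow_le_rpow_of_nonpos hx hξ.1.le (by linarith)
  nlinarith

lemma le_rpow_succ_sub {p : ℝ} (hp0 : 0 < p) (hp1 : p < 1) {x : ℝ} (hx : 0 ≤ x) :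
    p * (x+1) ^ (p - 1) ≤ (x+1) ^ p - x ^ p := by
  obtain ⟨ξ, hξ, hval⟩ := rpow_step hp0 hp1 hx
  rw [hval]
  have hξ0 : 0 < ξ := by have := hξ.1; linarith
  have : (x+1) ^ (p-1) ≤ ξ ^ (p-1) :=
    Real.rpow_le_rpow_of_nonpos hξ0 hξ.2.le (by linarith)
  nlinarith



lemma sum_Icc_shift (f : ℕ → ℝ) (n : ℕ) :
    ∑ k ∈ Finset.Icc 1 n, f k = ∑ i ∈ Finset.range n, f (1 + i) := by
  rw [← Finset.Ico_add_one_right_eq_Icc, Finset.sum_Ico_eq_sum_range]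
  simp

lemma sum_rpow_neg_le {γ : ℝ} (hγ0 : 0 < γ) (hγ1 : γ < 1) (n : ℕ) :
    ∑ k ∈ Finset.Icc 1 n, ((k:ℝ)) ^ (-γ) ≤ (n:ℝ) ^ (1-γ) / (1-γ) := by
  set p := 1 - γ with hpdef
  have hp0 : 0 < p := by simp only [hpdef]; linarith
  have hp1 : p < 1 := by simp only [hpdef]; linarith
  have hγp : -γ = p - 1 := by simp only [hpdef]; ring
  have h1 : ∑ k ∈ Finset.Icc 1 n, ((k:ℝ)) ^ (-γ)
      = ∑ i ∈ Finset.range n, ((i:ℝ)+1) ^ (p - 1) := by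
    rw [sum_Icc_shift]
    apply Finset.sum_congr rfl
    intro i _
    rw [hγp]
    norm_num
    ring_nf
  rw [h1]
  have h2 : ∑ i ∈ Finset.range n, ((i:ℝ)+1) ^ (p - 1)
      ≤ ∑ i ∈ Finset.range n, (((i+1:ℕ):ℝ) ^ p / p - ((i:ℕ):ℝ) ^ p / p) := by
    apply Finset.sum_le_sum
    intro i _
    have := le_rpow_succ_sub hp0 hp1 (x := (i:ℝ)) (Nat.cast_nonneg i)
    push_cast
    rw [div_sub_div_same, le_div_iff₀ hp0]
    linarith
  refine h2.trans ?_
  rw [Finset.sum_range_sub (fun i => ((i:ℕ):ℝ) ^ p / p)]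
  simp [Real.zero_rpow hp0.ne']

lemma le_sum_rpow_neg {γ : ℝ} (hγ0 : 0 < γ) (hγ1 : γ < 1) (n : ℕ) :
    ((n:ℝ) ^ (1-γ) - 1) / (1-γ) ≤ ∑ k ∈ Finset.Icc 1 n, ((k:ℝ)) ^ (-γ) := by
  set p := 1 - γ with hpdef
  have hp0 : 0 < p := by simp only [hpdef]; linarith
  have hp1 : p < 1 := by simp only [hpdef]; linarith
  have hγp : -γ = p - 1 := by simp only [hpdef]; ring
  have h1 : ∑ k ∈ Finset.Icc 1 n, ((k:ℝ)) ^ (-γ)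
      = ∑ i ∈ Finset.range n, ((i:ℝ)+1) ^ (p - 1) := by
    rw [sum_Icc_shift]
    apply Finset.sum_congr rfl
    intro i _
    rw [hγp]
    norm_num
    ring_nf
  rw [h1]
  have h2 : ∑ i ∈ Finset.range n, (((((i+1:ℕ)):ℝ)+1) ^ p / p - ((((i:ℕ)):ℝ)+1) ^ p / p)
      ≤ ∑ i ∈ Finset.range n, ((i:ℝ)+1) ^ (p - 1) := by
    apply Finset.sum_le_sum
    intro i _
    have hx : (0:ℝ) < (i:ℝ) + 1 := by positivity
    have := rpow_succ_sub_le hp0 hp1 (x := (i:ℝ)+1) hx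
    push_cast
    rw [div_sub_div_same, div_le_iff₀ hp0]
    nlinarith [Real.rpow_natCast ((i:ℝ)+1) 1]
  refine le_trans ?_ h2
  rw [Finset.sum_range_sub (fun i => ((((i:ℕ)):ℝ)+1) ^ p / p)]
  have hmono : (n:ℝ) ^ p ≤ ((n:ℝ)+1) ^ p :=
    Real.rpow_le_rpow (Nat.cast_nonneg n) (by linarith) hp0.le
  have h0 : (((0:ℕ):ℝ)+1) ^ p = 1 := by norm_num
  rw [h0]
  have h3 : ((n:ℝ) ^ p - 1) / p ≤ (((n:ℝ)+1) ^ p - 1) / p := by gcongr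
  rw [← sub_div]
  exact h3





lemma zrpG_eq (b γ : ℝ) {k : ℕ} (hk : 1 ≤ k) :
    zrpG b γ k = 1 + b * (k:ℝ) ^ (-γ) := by
  rw [zrpG, if_neg (by omega), Real.rpow_neg (Nat.cast_nonneg k), div_eq_mul_inv]

lemma zrpG_one_le {b γ : ℝ} (hb : 0 < b) {k : ℕ} (hk : 1 ≤ k) : 1 ≤ zrpG b γ k := by
  rw [zrpG_eq b γ hk]
  have : 0 < (k:ℝ) ^ (-γ) := Real.rpow_pos_of_pos (by exact_mod_cast hk) _
  nlinarith

lemma zrpW_pos {b γ : ℝ} (hb : 0 < b) (n : ℕ) : 0 < zrpW b γ n := by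
  apply Finset.prod_pos
  intro k hk
  have h1 : 1 ≤ zrpG b γ k := zrpG_one_le hb (Finset.mem_Icc.mp hk).1
  positivity

lemma zrpW_le_one {b γ : ℝ} (hb : 0 < b) (n : ℕ) : zrpW b γ n ≤ 1 := by
  apply Finset.prod_le_one
  · intro k hk
    have h1 : 1 ≤ zrpG b γ k := zrpG_one_le hb (Finset.mem_Icc.mp hk).1
    positivity
  · intro k hk
    have h1 : 1 ≤ zrpG b γ k := zrpG_one_le hb (Finset.mem_Icc.mp hk).1
    exact inv_le_one_of_one_le₀ h1

lemma zrpW_log {b γ : ℝ} (hb : 0 < b) (n : ℕ) :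
    Real.log (zrpW b γ n) = -∑ k ∈ Finset.Icc 1 n, Real.log (zrpG b γ k) := by
  rw [zrpW, Real.log_prod]
  · rw [← Finset.sum_neg_distrib]
    apply Finset.sum_congr rfl
    intro k hk
    rw [Real.log_inv]
  · intro k hk
    have h1 : 1 ≤ zrpG b γ k := zrpG_one_le hb (Finset.mem_Icc.mp hk).1
    positivity

lemma weight_bound {b γ : ℝ} (hγ0 : 0 < γ) (hγ1 : γ < 1) (hb : 0 < b) {c : ℝ} (hc0 : 0 < c)
    (hc : c < b / (1-γ)) :
    ∃ D : ℝ, 1 ≤ D ∧ ∀ n : ℕ, zrpW b γ n ≤ D * Real.exp (-c * (n:ℝ) ^ (1-γ)) := by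
  set p := 1 - γ with hpdef
  have hp0 : 0 < p := by simp only [hpdef]; linarith
  have hp1 : p < 1 := by simp only [hpdef]; linarith
  have hcp : c * p < b := by
    rw [lt_div_iff₀ hp0] at hc; exact hc
  have hε : 0 < b - c * p := by linarith
  obtain ⟨K₀, hK₀⟩ := exists_nat_ge ((b^2 / (b - c*p)) ^ (1/γ))
  set K : ℕ := K₀ + 1 with hKdef
  have hK1 : 1 ≤ K := by omega
  have hKR : ((b^2 / (b - c*p)) ^ (1/γ) : ℝ) ≤ (K:ℝ) := by
    push_cast [hKdef]; linarith
  have hKγ : b^2 / (b - c*p) ≤ (K:ℝ) ^ γ := by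
    have hx0 : (0:ℝ) ≤ (b^2 / (b - c*p)) ^ (1/γ) := Real.rpow_nonneg (by positivity) _
    have := Real.rpow_le_rpow hx0 hKR hγ0.le
    rwa [← Real.rpow_mul (le_of_lt (by positivity)), one_div,
      inv_mul_cancel₀ hγ0.ne', Real.rpow_one] at this
  have hδ : b^2 * (K:ℝ) ^ (-γ) ≤ b - c * p := by
    have hKp : (0:ℝ) < (K:ℝ) ^ γ := Real.rpow_pos_of_pos (by exact_mod_cast hK1) _
    rw [Real.rpow_neg (Nat.cast_nonneg K), mul_inv_le_iff₀ hKp]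
    rw [div_le_iff₀ hε] at hKγ
    nlinarith
  refine ⟨Real.exp (b^2 * K + c), Real.one_le_exp (by positivity), fun n => ?_⟩
  -- log bound
  set S : ℝ := ∑ k ∈ Finset.Icc 1 n, ((k:ℝ)) ^ (-γ) with hSdef
  have hS0 : 0 ≤ S := Finset.sum_nonneg fun k _ => Real.rpow_nonneg (Nat.cast_nonneg k) _
  have hSlb : ((n:ℝ) ^ p - 1) / p ≤ S := le_sum_rpow_neg hγ0 hγ1 n
  -- T bound
  have hT : ∑ k ∈ Finset.Icc 1 n, (((k:ℝ)) ^ (-γ))^2 ≤ (K:ℝ) + (K:ℝ) ^ (-γ) * S := by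
    have hterm : ∀ k ∈ Finset.Icc 1 n,
        (((k:ℝ)) ^ (-γ))^2 ≤ (if k ≤ K then (1:ℝ) else 0) + (K:ℝ) ^ (-γ) * ((k:ℝ)) ^ (-γ) := by
      intro k hk
      have hk1 : 1 ≤ k := (Finset.mem_Icc.mp hk).1
      have hk1R : (1:ℝ) ≤ (k:ℝ) := by exact_mod_cast hk1
      have hkγ0 : 0 < ((k:ℝ)) ^ (-γ) := Real.rpow_pos_of_pos (by linarith) _
      by_cases hkK : k ≤ K
      · rw [if_pos hkK]
        have h1 : ((k:ℝ)) ^ (-γ) ≤ 1 :=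
          Real.rpow_le_one_of_one_le_of_nonpos hk1R (by linarith)
        have h2 : 0 ≤ (K:ℝ) ^ (-γ) * ((k:ℝ)) ^ (-γ) := by positivity
        nlinarith
      · rw [if_neg hkK]
        have hKk : ((k:ℝ)) ^ (-γ) ≤ (K:ℝ) ^ (-γ) := by
          apply Real.rpow_le_rpow_of_nonpos (by exact_mod_cast hK1) (by exact_mod_cast (by omega : K ≤ k)) (by linarith)
        nlinarith
    refine (Finset.sum_le_sum hterm).trans ?_
    rw [Finset.sum_add_distrib, ← Finset.mul_sum]
    have hind : ∑ k ∈ Finset.Icc 1 n, (if k ≤ K then (1:ℝ) else 0) ≤ (K:ℝ) := by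
      rw [Finset.sum_boole]
      have hsub : (Finset.Icc 1 n).filter (fun k => k ≤ K) ⊆ Finset.Icc 1 K := by
        intro k hk
        simp only [Finset.mem_filter, Finset.mem_Icc] at hk ⊢
        omega
      have := Finset.card_le_card hsub
      rw [Nat.card_Icc] at this
      exact_mod_cast (by omega : (Finset.filter (fun k => k ≤ K) (Finset.Icc 1 n)).card ≤ K)
    linarith [hind]
  -- log estimate
  have hlog : Real.log (zrpW b γ n) ≤ b^2 * K + c - c * (n:ℝ) ^ p := by
    rw [zrpW_log hb n]
    have hterm : ∀ k ∈ Finset.Icc 1 n,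
        b * ((k:ℝ)) ^ (-γ) - b^2 * (((k:ℝ)) ^ (-γ))^2 ≤ Real.log (zrpG b γ k) := by
      intro k hk
      have hk1 := (Finset.mem_Icc.mp hk).1
      rw [zrpG_eq b γ hk1]
      have hu : 0 ≤ b * ((k:ℝ)) ^ (-γ) := by
        have : (0:ℝ) < (k:ℝ) := by exact_mod_cast hk1
        positivity
      have := log_ge_sub_sq hu
      nlinarith [this]
    have hsum := Finset.sum_le_sum hterm
    rw [Finset.sum_sub_distrib, ← Finset.mul_sum, ← Finset.mul_sum] at hsum
    have h3 : b^2 * ∑ k ∈ Finset.Icc 1 n, (((k:ℝ)) ^ (-γ))^2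
        ≤ b^2 * (K:ℝ) + b^2 * ((K:ℝ) ^ (-γ) * S) := by
      have := mul_le_mul_of_nonneg_left hT (by positivity : (0:ℝ) ≤ b^2)
      linarith [this, (mul_add (b^2) ((K:ℝ)) ((K:ℝ) ^ (-γ) * S)) ▸ this]
    have hchain : b * S - b^2 * (K:ℝ) - b^2 * ((K:ℝ) ^ (-γ) * S)
        ≤ ∑ k ∈ Finset.Icc 1 n, Real.log (zrpG b γ k) := by linarith
    have h4 : c * p * S ≤ b * S - b^2 * ((K:ℝ) ^ (-γ) * S) := by nlinarith [hδ, hS0]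
    have h5 : c * ((n:ℝ) ^ p - 1) ≤ c * p * S := by
      calc c * ((n:ℝ) ^ p - 1) = c * p * (((n:ℝ) ^ p - 1) / p) := by field_simp
        _ ≤ c * p * S := mul_le_mul_of_nonneg_left hSlb (mul_pos hc0 hp0).le
    linarith
  have hW := zrpW_pos (γ := γ) hb n
  calc zrpW b γ n = Real.exp (Real.log (zrpW b γ n)) := (Real.exp_log hW).symm
    _ ≤ Real.exp (b^2 * K + c - c * (n:ℝ) ^ p) := Real.exp_le_exp.mpr hlog
    _ = Real.exp (b^2 * K + c) * Real.exp (-c * (n:ℝ) ^ p) := by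
        rw [← Real.exp_add]; ring_nf

lemma summable_pow_exp {p : ℝ} (hp0 : 0 < p) {c : ℝ} (hc : 0 < c) (j : ℕ) :
    Summable (fun n : ℕ => (n:ℝ) ^ j * Real.exp (-c * (n:ℝ) ^ p)) := by
  have key : ∀ n : ℕ, 1 ≤ n → ((n:ℝ) ^ p) ^ (((j:ℝ)+2)/p) * Real.exp (-c * (n:ℝ)^p)
      = (n:ℝ) ^ (j+2) * Real.exp (-c * (n:ℝ) ^ p) := by
    intro n hn
    have hn0 : (0:ℝ) ≤ (n:ℝ) := Nat.cast_nonneg n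
    congr 1
    rw [← Real.rpow_mul hn0]
    have h : p * (((j:ℝ)+2)/p) = (j:ℝ)+2 := by field_simp
    rw [h, show ((j:ℝ)+2) = ((j+2:ℕ):ℝ) by push_cast; ring, Real.rpow_natCast]
  have hlim : Tendsto (fun n : ℕ => (n:ℝ) ^ (j+2) * Real.exp (-c * (n:ℝ) ^ p)) atTop (𝓝 0) := by
    have h1 : Tendsto (fun x : ℝ => x ^ (((j:ℝ)+2)/p) * Real.exp (-c * x)) atTop (𝓝 0) :=
      tendsto_rpow_mul_exp_neg_mul_atTop_nhds_zero _ c hc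
    have h2 : Tendsto (fun n : ℕ => (n:ℝ) ^ p) atTop atTop :=
      (tendsto_rpow_atTop hp0).comp tendsto_natCast_atTop_atTop
    apply (h1.comp h2).congr'
    filter_upwards [eventually_ge_atTop 1] with n hn
    simpa using key n hn
  apply Summable.of_norm_bounded_eventually_nat (g := fun n : ℕ => 1/(n:ℝ)^2)
  · exact Real.summable_one_div_nat_pow.mpr one_lt_two
  · have h := hlim.eventually (eventually_le_nhds (by norm_num : (0:ℝ) < 1))
    filter_upwards [h, eventually_ge_atTop 1] with n h1 hn
    have hn0 : (0:ℝ) < (n:ℝ) := by exact_mod_cast hn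
    have hE : 0 < Real.exp (-c * (n:ℝ)^p) := Real.exp_pos _
    rw [Real.norm_eq_abs, abs_of_nonneg (by positivity)]
    rw [le_div_iff₀ (by positivity : (0:ℝ) < (n:ℝ)^2)]
    calc (n:ℝ)^j * Real.exp (-c*(n:ℝ)^p) * (n:ℝ)^2
        = (n:ℝ)^(j+2) * Real.exp (-c*(n:ℝ)^p) := by ring
      _ ≤ 1 := h1

lemma exp_taylor_lb {x : ℝ} : 0 ≤ Real.exp x - 1 - x := by
  have := Real.add_one_le_exp x
  linarith

lemma exp_taylor_ub {x : ℝ} (hx : 0 ≤ x) : Real.exp x - 1 - x ≤ x^2 * Real.exp x := by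
  rcases le_or_gt 1 x with h | h
  · have h2 : Real.exp x ≤ x^2 * Real.exp x :=
      le_mul_of_one_le_left (Real.exp_pos x).le (by nlinarith)
    linarith
  · have hprod : Real.exp x * Real.exp (-x) = 1 := by rw [← Real.exp_add]; simp
    have h1 : Real.exp x * (1 - x) ≤ 1 := by
      have h2 : 1 - x ≤ Real.exp (-x) := by linarith [Real.add_one_le_exp (-x)]
      calc Real.exp x * (1 - x) ≤ Real.exp x * Real.exp (-x) :=
            mul_le_mul_of_nonneg_left h2 (Real.exp_pos x).le
        _ = 1 := hprod
    have h3 := mul_le_mul_of_nonneg_right h1 (by linarith : (0:ℝ) ≤ 1 + x)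
    nlinarith [Real.exp_pos x]

/-- Under the cut-off scaling `m_n → ∞`, `μ_n → 0⁺`, `m_n^γ·μ_n → C`
with `0 < C < b/(1−γ)`, the truncated partition function expands as
`z_{m_n}(e^{μ_n}) = z(1) + z'(1)·μ_n + o(μ_n)`. -/
theorem truncated_partition_expansion (b γ : ℝ) (hγ0 : 0 < γ) (hγ1 : γ < 1) (hb : 0 < b)
    (m : ℕ → ℕ) (μ : ℕ → ℝ) (C : ℝ)
    (hmpos : ∀ n, 0 < m n) (hμpos : ∀ n, 0 < μ n)
    (hm : Tendsto m atTop atTop) (hμ : Tendsto μ atTop (nhds 0))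
    (hC : Tendsto (fun n => (m n : ℝ) ^ γ * μ n) atTop (nhds C))
    (hC0 : 0 < C) (hCb : C < b / (1 - γ)) :
    Tendsto
      (fun n => (zrpZtrunc b γ (m n) (Real.exp (μ n)) - zrpZfun b γ 1
        - μ n * (∑' k : ℕ, (k : ℝ) * zrpW b γ k)) / μ n) atTop (nhds 0) := by
  set p := 1 - γ with hpdef
  have hp0 : 0 < p := by simp only [hpdef]; linarith
  have hp1 : p < 1 := by simp only [hpdef]; linarith
  set W : ℕ → ℝ := zrpW b γ with hWdef
  have hW0 : ∀ k, 0 < W k := fun k => zrpW_pos hb k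
  have hβpos : 0 < b / p := by positivity
  set c : ℝ := (C + b / p) / 2 with hcdef
  have hc0 : 0 < c := by positivity
  have hcC : C < c := by simp only [hcdef]; linarith [hCb]
  have hcβ : c < b / p := by simp only [hcdef]; linarith [hCb]
  have hcβ' : c < b / (1 - γ) := by rw [← hpdef]; exact hcβ
  obtain ⟨D, hD1, hDb⟩ := weight_bound hγ0 hγ1 hb hc0 hcβ'
  rw [← hpdef] at hDb
  have hD0 : (0:ℝ) < D := lt_of_lt_of_le one_pos hD1
  set c₁ : ℝ := (C + c) / 2 with hc₁def
  have hc₁C : C < c₁ := by simp only [hc₁def]; linarith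
  have hc₁c : c₁ < c := by simp only [hc₁def]; linarith
  have hc₁0 : 0 < c₁ := by simp only [hc₁def]; positivity
  set δ : ℝ := c - c₁ with hδdef
  have hδ0 : 0 < δ := by simp only [hδdef]; linarith
  -- summability facts
  have hsE : Summable (fun k : ℕ => Real.exp (-c * (k:ℝ) ^ p)) := by
    simpa using summable_pow_exp hp0 hc0 0
  have hsE2 : Summable (fun k : ℕ => Real.exp (-(c/2) * (k:ℝ) ^ p)) := by
    simpa using summable_pow_exp hp0 (half_pos hc0) 0
  have hsk2 : Summable (fun k : ℕ => (k:ℝ) ^ 2 * Real.exp (-δ * (k:ℝ) ^ p)) :=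
    summable_pow_exp hp0 hδ0 2
  have hsW : Summable W :=
    Summable.of_nonneg_of_le (fun k => (hW0 k).le) (fun k => hDb k) (hsE.mul_left D)
  have hsE1 : Summable (fun k : ℕ => (k:ℝ) * Real.exp (-c * (k:ℝ) ^ p)) := by
    simpa using summable_pow_exp hp0 hc0 1
  have hsW1 : Summable (fun k : ℕ => (k:ℝ) * W k) := by
    apply Summable.of_nonneg_of_le
      (fun k => mul_nonneg (Nat.cast_nonneg k) (hW0 k).le)
      (fun k => ?_) (hsE1.mul_left D)
    calc (k:ℝ) * W k ≤ (k:ℝ) * (D * Real.exp (-c * (k:ℝ) ^ p)) :=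
          mul_le_mul_of_nonneg_left (hDb k) (Nat.cast_nonneg k)
      _ = D * ((k:ℝ) * Real.exp (-c * (k:ℝ) ^ p)) := by ring
  -- abbreviations
  set SW : ℝ := ∑' k : ℕ, W k with hSWdef
  set S1 : ℝ := ∑' k : ℕ, (k:ℝ) * W k with hS1def
  set E : ℝ := ∑' i : ℕ, Real.exp (-(c/2) * (i:ℝ) ^ p) with hEdef
  have hE0 : 0 ≤ E := tsum_nonneg fun i => (Real.exp_pos _).le
  set F : ℝ := ∑' k : ℕ, (k:ℝ) ^ 2 * Real.exp (-δ * (k:ℝ) ^ p) with hFdef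
  set A : ℕ → ℝ := fun n =>
    (∑ k ∈ Finset.range (m n + 1), W k * (Real.exp ((k:ℝ) * μ n) - 1 - (k:ℝ) * μ n)) / μ n
    with hAdef
  set B : ℕ → ℝ := fun n => (SW - ∑ k ∈ Finset.range (m n + 1), W k) / μ n with hBdef
  set Cc : ℕ → ℝ := fun n => S1 - ∑ k ∈ Finset.range (m n + 1), (k:ℝ) * W k with hCcdef
  -- pointwise identity
  have key : ∀ n, (zrpZtrunc b γ (m n) (Real.exp (μ n)) - zrpZfun b γ 1
      - μ n * S1) / μ n = A n - B n - Cc n := by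
    intro n
    have hμn : μ n ≠ 0 := (hμpos n).ne'
    have htr : zrpZtrunc b γ (m n) (Real.exp (μ n))
        = ∑ k ∈ Finset.range (m n + 1), W k * Real.exp ((k:ℝ) * μ n) := by
      simp only [zrpZtrunc]
      apply Finset.sum_congr rfl
      intro k _
      rw [hWdef, ← Real.exp_nat_mul]
    have hzf : zrpZfun b γ 1 = SW := by
      simp only [zrpZfun, one_pow, mul_one]
      rfl
    rw [htr, hzf]
    have expand : ∑ k ∈ Finset.range (m n + 1), W k * (Real.exp ((k:ℝ) * μ n) - 1 - (k:ℝ) * μ n)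
        = (∑ k ∈ Finset.range (m n + 1), W k * Real.exp ((k:ℝ) * μ n))
          - (∑ k ∈ Finset.range (m n + 1), W k)
          - μ n * ∑ k ∈ Finset.range (m n + 1), (k:ℝ) * W k := by
      rw [Finset.mul_sum, ← Finset.sum_sub_distrib, ← Finset.sum_sub_distrib]
      apply Finset.sum_congr rfl
      intro k _
      ring
    simp only [hAdef, hBdef, hCcdef]
    rw [expand]
    field_simp
    simp only [mul_comm (μ n)]
    ring
  -- limit of Cc
  have hCc : Tendsto Cc atTop (𝓝 0) := by
    have h1 : Tendsto (fun M => ∑ k ∈ Finset.range M, (k:ℝ) * W k) atTop (𝓝 S1) :=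
      hsW1.hasSum.tendsto_sum_nat
    have h2 : Tendsto (fun n => m n + 1) atTop atTop :=
      tendsto_atTop_mono (fun n => Nat.le_succ (m n)) hm
    have h3 := h1.comp h2
    simpa [hCcdef] using (tendsto_const_nhds (x := S1)).sub h3
  -- tail bounds
  have htail_eq : ∀ N : ℕ, SW - ∑ k ∈ Finset.range N, W k = ∑' i, W (i + N) := by
    intro N
    have := hsW.sum_add_tsum_nat_add N
    rw [hSWdef]
    linarith
  have htail_le : ∀ N : ℕ, (∑' i, W (i + N)) ≤ D * E * Real.exp (-(c/2) * (N:ℝ) ^ p) := by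
    intro N
    have hterm : ∀ i : ℕ, W (i + N)
        ≤ D * Real.exp (-(c/2) * (N:ℝ) ^ p) * Real.exp (-(c/2) * (i:ℝ) ^ p) := by
      intro i
      refine (hDb (i + N)).trans ?_
      rw [mul_assoc, ← Real.exp_add]
      apply mul_le_mul_of_nonneg_left _ hD0.le
      apply Real.exp_le_exp.mpr
      have hiN : ((i + N : ℕ) : ℝ) = (i:ℝ) + (N:ℝ) := by push_cast; ring
      rw [hiN]
      have h1 : (N:ℝ) ^ p ≤ ((i:ℝ) + N) ^ p :=
        Real.rpow_le_rpow (Nat.cast_nonneg N) (by linarith [Nat.cast_nonneg (α := ℝ) i]) hp0.le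
      have h2 : (i:ℝ) ^ p ≤ ((i:ℝ) + N) ^ p :=
        Real.rpow_le_rpow (Nat.cast_nonneg i) (by linarith [Nat.cast_nonneg (α := ℝ) N]) hp0.le
      nlinarith
    have hsR : Summable (fun i : ℕ =>
        D * Real.exp (-(c/2) * (N:ℝ) ^ p) * Real.exp (-(c/2) * (i:ℝ) ^ p)) :=
      hsE2.mul_left _
    have hsL : Summable (fun i => W (i + N)) := (summable_nat_add_iff N).mpr hsW
    calc (∑' i, W (i + N))
        ≤ ∑' i : ℕ, D * Real.exp (-(c/2) * (N:ℝ) ^ p) * Real.exp (-(c/2) * (i:ℝ) ^ p) :=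
          hsL.tsum_le_tsum hterm hsR
      _ = D * Real.exp (-(c/2) * (N:ℝ) ^ p) * E := by rw [tsum_mul_left, hEdef]
      _ = D * E * Real.exp (-(c/2) * (N:ℝ) ^ p) := by ring
  -- limit of B
  have hmR : Tendsto (fun n => (m n : ℝ)) atTop atTop :=
    tendsto_natCast_atTop_atTop.comp hm
  have hmpos' : ∀ n, (0:ℝ) < (m n : ℝ) := fun n => by exact_mod_cast hmpos n
  have hX : Tendsto (fun n => (m n : ℝ) ^ γ * Real.exp (-(c/2) * (m n : ℝ) ^ p))
      atTop (𝓝 0) := by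
    have hg : Tendsto (fun y : ℝ => y ^ (γ/p) * Real.exp (-(c/2) * y)) atTop (𝓝 0) :=
      tendsto_rpow_mul_exp_neg_mul_atTop_nhds_zero _ _ (half_pos hc0)
    have hyp : Tendsto (fun n => (m n : ℝ) ^ p) atTop atTop :=
      (tendsto_rpow_atTop hp0).comp hmR
    apply (hg.comp hyp).congr
    intro n
    simp only [Function.comp_apply]
    congr 1
    rw [← Real.rpow_mul (hmpos' n).le]
    congr 1
    field_simp
  have hY : Tendsto (fun n => ((m n : ℝ) ^ γ * μ n)⁻¹) atTop (𝓝 C⁻¹) :=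
    hC.inv₀ hC0.ne'
  have hU : Tendsto (fun n => D * E *
      ((m n : ℝ) ^ γ * Real.exp (-(c/2) * (m n : ℝ) ^ p)) * ((m n : ℝ) ^ γ * μ n)⁻¹)
      atTop (𝓝 0) := by
    have h := (hX.const_mul (D * E)).mul hY
    simpa using h
  have hB : Tendsto B atTop (𝓝 0) := by
    apply tendsto_of_tendsto_of_tendsto_of_le_of_le tendsto_const_nhds hU
    · intro n
      simp only [hBdef]
      apply div_nonneg _ (hμpos n).le
      rw [htail_eq]
      exact tsum_nonneg fun i => (hW0 _).le
    · intro n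
      have hmγ : (0:ℝ) < (m n : ℝ) ^ γ := Real.rpow_pos_of_pos (hmpos' n) _
      have h2 : SW - ∑ k ∈ Finset.range (m n + 1), W k
          ≤ D * E * Real.exp (-(c/2) * (m n : ℝ) ^ p) := by
        rw [htail_eq]
        refine (htail_le (m n + 1)).trans ?_
        have hmono : (m n : ℝ) ^ p ≤ ((m n + 1 : ℕ) : ℝ) ^ p :=
          Real.rpow_le_rpow (Nat.cast_nonneg _) (by push_cast; linarith) hp0.le
        have hexp : Real.exp (-(c/2) * ((m n + 1 : ℕ) : ℝ) ^ p)
            ≤ Real.exp (-(c/2) * (m n : ℝ) ^ p) := by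
          apply Real.exp_le_exp.mpr
          nlinarith [half_pos hc0]
        exact mul_le_mul_of_nonneg_left hexp (mul_nonneg hD0.le hE0)
      have h3 : B n ≤ D * E * Real.exp (-(c/2) * (m n : ℝ) ^ p) / μ n := by
        simp only [hBdef]
        gcongr
        exact (hμpos n).le
      have h4 : D * E * Real.exp (-(c/2) * (m n : ℝ) ^ p) / μ n
          = D * E * ((m n : ℝ) ^ γ * Real.exp (-(c/2) * (m n : ℝ) ^ p))
            * ((m n : ℝ) ^ γ * μ n)⁻¹ := by
        field_simp [(hμpos n).ne', hmγ.ne']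
      rw [h4] at h3
      exact h3
  -- limit of A
  have hA0 : ∀ n, 0 ≤ A n := by
    intro n
    apply div_nonneg _ (hμpos n).le
    apply Finset.sum_nonneg
    intro k _
    exact mul_nonneg (hW0 k).le exp_taylor_lb
  have hAub : ∀ᶠ n in atTop, A n ≤ μ n * (D * F) := by
    have hev : ∀ᶠ n in atTop, (m n : ℝ) ^ γ * μ n ≤ c₁ :=
      hC.eventually (eventually_le_nhds hc₁C)
    filter_upwards [hev] with n hn
    have hμn := hμpos n
    have hbound : ∀ k ∈ Finset.range (m n + 1),
        W k * (Real.exp ((k:ℝ) * μ n) - 1 - (k:ℝ) * μ n)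
        ≤ μ n ^ 2 * D * ((k:ℝ) ^ 2 * Real.exp (-δ * (k:ℝ) ^ p)) := by
      intro k hk
      have hkm : k ≤ m n := by
        have := Finset.mem_range.mp hk
        omega
      have hx : 0 ≤ (k:ℝ) * μ n := mul_nonneg (Nat.cast_nonneg k) hμn.le
      have hkp0 : (0:ℝ) ≤ (k:ℝ) ^ p := Real.rpow_nonneg (Nat.cast_nonneg k) _
      have hkp : (k:ℝ) * μ n ≤ c₁ * (k:ℝ) ^ p := by
        rcases Nat.eq_zero_or_pos k with rfl | hk1
        · simp [Real.zero_rpow hp0.ne']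
        · have hk0R : (0:ℝ) < (k:ℝ) := by exact_mod_cast hk1
          have hkid : (k:ℝ) ^ γ * (k:ℝ) ^ p = (k:ℝ) := by
            rw [← Real.rpow_add hk0R, show γ + p = 1 by rw [hpdef]; ring, Real.rpow_one]
          have hkm' : (k:ℝ) ^ γ ≤ (m n : ℝ) ^ γ :=
            Real.rpow_le_rpow (Nat.cast_nonneg k) (by exact_mod_cast hkm) hγ0.le
          calc (k:ℝ) * μ n = ((k:ℝ) ^ γ * μ n) * (k:ℝ) ^ p := by
                conv_lhs => rw [← hkid]
                ring
            _ ≤ ((m n : ℝ) ^ γ * μ n) * (k:ℝ) ^ p := by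
                apply mul_le_mul_of_nonneg_right _ hkp0
                exact mul_le_mul_of_nonneg_right hkm' hμn.le
            _ ≤ c₁ * (k:ℝ) ^ p := mul_le_mul_of_nonneg_right hn hkp0
      have hWe : W k * Real.exp ((k:ℝ) * μ n) ≤ D * Real.exp (-δ * (k:ℝ) ^ p) := by
        calc W k * Real.exp ((k:ℝ) * μ n)
            ≤ (D * Real.exp (-c * (k:ℝ) ^ p)) * Real.exp ((k:ℝ) * μ n) :=
              mul_le_mul_of_nonneg_right (hDb k) (Real.exp_pos _).le
          _ = D * Real.exp ((k:ℝ) * μ n - c * (k:ℝ) ^ p) := by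
              rw [mul_assoc, ← Real.exp_add]
              ring_nf
          _ ≤ D * Real.exp (-δ * (k:ℝ) ^ p) := by
              apply mul_le_mul_of_nonneg_left _ hD0.le
              apply Real.exp_le_exp.mpr
              have hδeq : c₁ * (k:ℝ) ^ p - c * (k:ℝ) ^ p = -δ * (k:ℝ) ^ p := by
                rw [hδdef]; ring
              linarith
      calc W k * (Real.exp ((k:ℝ) * μ n) - 1 - (k:ℝ) * μ n)
          ≤ W k * (((k:ℝ) * μ n) ^ 2 * Real.exp ((k:ℝ) * μ n)) :=
            mul_le_mul_of_nonneg_left (exp_taylor_ub hx) (hW0 k).le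
        _ = ((k:ℝ) * μ n) ^ 2 * (W k * Real.exp ((k:ℝ) * μ n)) := by ring
        _ ≤ ((k:ℝ) * μ n) ^ 2 * (D * Real.exp (-δ * (k:ℝ) ^ p)) :=
            mul_le_mul_of_nonneg_left hWe (by positivity)
        _ = μ n ^ 2 * D * ((k:ℝ) ^ 2 * Real.exp (-δ * (k:ℝ) ^ p)) := by ring
    have hsum := Finset.sum_le_sum hbound
    have hF : ∑ k ∈ Finset.range (m n + 1), ((k:ℝ) ^ 2 * Real.exp (-δ * (k:ℝ) ^ p)) ≤ F :=
      hsk2.sum_le_tsum _ (fun k _ => by positivity)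
    have h5 : ∑ k ∈ Finset.range (m n + 1), W k * (Real.exp ((k:ℝ) * μ n) - 1 - (k:ℝ) * μ n)
        ≤ μ n ^ 2 * D * F := by
      refine hsum.trans ?_
      rw [← Finset.mul_sum]
      exact mul_le_mul_of_nonneg_left hF (by positivity)
    simp only [hAdef]
    rw [div_le_iff₀ hμn]
    calc ∑ k ∈ Finset.range (m n + 1), W k * (Real.exp ((k:ℝ) * μ n) - 1 - (k:ℝ) * μ n)
        ≤ μ n ^ 2 * D * F := h5
      _ = μ n * (D * F) * μ n := by ring
  have hA : Tendsto A atTop (𝓝 0) := by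
    apply tendsto_of_tendsto_of_tendsto_of_le_of_le' tendsto_const_nhds ?_
      (Eventually.of_forall hA0) hAub
    simpa using hμ.mul_const (D * F)
  have hfinal := ((hA.sub hB).sub hCc).congr (fun n => (key n).symm)
  simpa using hfinal
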